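/- (Gibbard 1973, game-form version, underlying the paper's Theorem 2.) Let X be a finite set of outcomes, let each of N players i have a nonempty strategy set S_i, and let g : S_1 × ⋯ × S_N → X be a game form. Say g is straightforward if for every profile of strict linear orders (≻_1, …, ≻_N) on X, every player i has a dominant strategy s_i^*, i.e., for all s_{-i} and all s_i, g(s_i^*, s_{-i}) ≻_i g(s_i, s_{-i}) or g(s_i^*, s_{-i}) = g(s_i, s_{-i}). If g is straightforward and the range of g contains at least 3 outcomes, then g is dictatorial: there exists a player i such that for every x in the range of g there exists s_i ∈ S_i with g(s_i, s_{-i}) = x for all s_{-i}. -/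

import Mathlib

set_option linter.unusedSectionVars false

namespace GibbardAux

variable {X : Type*}

/-- Numeric rank of `x` under utility `u`, with tie-breaking injection `ι` bounded by `C`. -/
def R (ι : X → ℕ) (C : ℕ) (u : X → ℕ) (x : X) : ℕ := u x * C + ι x

/-- Strict preference derived from a utility function: `Pr ι C u a b` means `a` is
strictly better than `b`. -/
def Pr (ι : X → ℕ) (C : ℕ) (u : X → ℕ) (a b : X) : Prop := R ι C u b < R ι C u a

section Basic

variable {ι : X → ℕ} {C : ℕ}

lemma Pr_of_lt (hC : ∀ x, ι x < C) {u : X → ℕ} {a b : X} (h : u b < u a) : Pr ι C u a b := by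
  unfold Pr R
  have h1 : u b * C + ι b < (u b + 1) * C := by
    have := hC b; nlinarith
  have h2 : (u b + 1) * C ≤ u a * C := Nat.mul_le_mul_right _ h
  omega

lemma Pr.le (hC : ∀ x, ι x < C) {u : X → ℕ} {a b : X} (h : Pr ι C u a b) : u b ≤ u a := by
  by_contra hlt
  have := Pr_of_lt hC (u := u) (a := b) (b := a) (by omega)
  unfold Pr at this h; omega

lemma Pr_irrefl {u : X → ℕ} (a : X) : ¬ Pr ι C u a a := lt_irrefl _

lemma Pr_asymm {u : X → ℕ} {a b : X} (h : Pr ι C u a b) : ¬ Pr ι C u b a := by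
  unfold Pr at *; omega

lemma Pr_trichot (hι : Function.Injective ι) (hC : ∀ x, ι x < C) {u : X → ℕ} {a b : X}
    (h : a ≠ b) : Pr ι C u a b ∨ Pr ι C u b a := by
  have hR : R ι C u a ≠ R ι C u b := by
    intro he
    unfold R at he
    have ha := hC a; have hb := hC b
    have hu : u a = u b := by nlinarith
    rw [hu] at he
    have : ι a = ι b := by omega
    exact h (hι this)
  unfold Pr; omega

lemma Pr_STO (hι : Function.Injective ι) (hC : ∀ x, ι x < C) (u : X → ℕ) :
    IsStrictTotalOrder X (Pr ι C u) := by
  refine { trichotomous := ?_, irrefl := fun a => Pr_irrefl a,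
           trans := fun a b c h1 h2 => by unfold Pr at *; omega }
  intro a b
  rcases eq_or_ne a b with rfl | hab
  · exact fun _ _ => rfl
  · rcases Pr_trichot hι hC hab with h | h
    · exact fun h1 _ => absurd h h1
    · exact fun _ h2 => absurd h h2

end Basic

/-- Replace coordinates of `U` by those of `V` one at a time, keeping the value of `f`. -/
lemma coordWalk {N : ℕ} {P : Fin N → Type*} (f : (∀ j, P j) → X) (U V : ∀ j, P j) (w : X)
    (h : ∀ (W : ∀ j, P j) (i : Fin N), (∀ j, W j = U j ∨ W j = V j) → f W = w →
      f (Function.update W i (V i)) = w)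
    (h0 : f U = w) : f V = w := by
  classical
  have key : ∀ k : ℕ, k ≤ N → f (fun j => if j.val < k then V j else U j) = w := by
    intro k
    induction k with
    | zero => intro _; simpa using h0
    | succ k ih =>
      intro hk
      have hk' : k ≤ N := Nat.le_of_succ_le hk
      have hkN : k < N := hk
      have hmem : ∀ j : Fin N, (fun j => if j.val < k then V j else U j) j = U j ∨
          (fun j => if j.val < k then V j else U j) j = V j := by
        intro j; by_cases hj : j.val < k
        · right; simp [hj]
        · left; simp [hj]
      have hstep := h _ ⟨k, hkN⟩ hmem (ih hk')
      have heq : Function.update (fun j => if j.val < k then V j else U j) ⟨k, hkN⟩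
          (V ⟨k, hkN⟩) = fun j => if j.val < k + 1 then V j else U j := by
        funext j
        rcases eq_or_ne j ⟨k, hkN⟩ with rfl | hj
        · simp
        · have hvk : j.val ≠ k := fun hh => hj (Fin.ext hh)
          rw [Function.update_of_ne hj]
          by_cases h1 : j.val < k
          · rw [if_pos h1, if_pos (by omega)]
          · rw [if_neg h1, if_neg (by omega)]
      rw [heq] at hstep
      exact hstep
  have := key N le_rfl
  have hV : (fun j : Fin N => if j.val < N then V j else U j) = V := by
    funext j; simp [j.isLt]
  rwa [hV] at this

/-! ### Leveled utility profiles -/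

variable [DecidableEq X]

/-- Utility with `u x = p`, `u y = q`, zero elsewhere. -/
def lv2 (x y : X) (p q : ℕ) : X → ℕ := fun t => if t = x then p else if t = y then q else 0

/-- Utility with `u x = p`, `u y = q`, `u z = r`, zero elsewhere. -/
def lv3 (x y z : X) (p q r : ℕ) : X → ℕ :=
  fun t => if t = x then p else if t = y then q else if t = z then r else 0

/-- Utility with four specified levels. -/
def lv4 (x y z w : X) (p q r s : ℕ) : X → ℕ :=
  fun t => if t = x then p else if t = y then q else if t = z then r else
    if t = w then s else 0

section lvEval

variable (x y z w t : X) (p q r s : ℕ)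

lemma lv2_x : lv2 x y p q x = p := by simp [lv2]
lemma lv2_y (h : y ≠ x) : lv2 x y p q y = q := by simp [lv2, h]
lemma lv2_other (h1 : t ≠ x) (h2 : t ≠ y) : lv2 x y p q t = 0 := by simp [lv2, h1, h2]
lemma lv3_x : lv3 x y z p q r x = p := by simp [lv3]
lemma lv3_y (h : y ≠ x) : lv3 x y z p q r y = q := by simp [lv3, h]
lemma lv3_z (h1 : z ≠ x) (h2 : z ≠ y) : lv3 x y z p q r z = r := by simp [lv3, h1, h2]
lemma lv3_other (h1 : t ≠ x) (h2 : t ≠ y) (h3 : t ≠ z) : lv3 x y z p q r t = 0 := by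
  simp [lv3, h1, h2, h3]
lemma lv4_x : lv4 x y z w p q r s x = p := by simp [lv4]
lemma lv4_y (h : y ≠ x) : lv4 x y z w p q r s y = q := by simp [lv4, h]
lemma lv4_z (h1 : z ≠ x) (h2 : z ≠ y) : lv4 x y z w p q r s z = r := by simp [lv4, h1, h2]
lemma lv4_w (h1 : w ≠ x) (h2 : w ≠ y) (h3 : w ≠ z) : lv4 x y z w p q r s w = s := by
  simp [lv4, h1, h2, h3]
lemma lv4_other (h1 : t ≠ x) (h2 : t ≠ y) (h3 : t ≠ z) (h4 : t ≠ w) :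
    lv4 x y z w p q r s t = 0 := by simp [lv4, h1, h2, h3, h4]

end lvEval

section SCF

variable {N : ℕ} {ι : X → ℕ} {C : ℕ}
variable (f : (Fin N → (X → ℕ)) → X) (A : Set X)

/-- The basic "x versus y" profile: voters in `S` have `y ≻ x ≻ rest`, the others
`x ≻ y ≻ rest`. -/
def Emix (x y : X) (S : Finset (Fin N)) : Fin N → (X → ℕ) :=
  fun i => if i ∈ S then lv2 x y 1 2 else lv2 x y 2 1

/-- Coalition `S` is winning for `y` against `x`. -/
def Wn (x y : X) (S : Finset (Fin N)) : Prop := f (Emix x y S) = y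

section EmixEval
variable (x y t : X) (S : Finset (Fin N)) (i : Fin N)

lemma Emix_vx : Emix x y S i x = if i ∈ S then 1 else 2 := by
  unfold Emix; split <;> simp [lv2_x]
lemma Emix_vy (h : y ≠ x) : Emix x y S i y = if i ∈ S then 2 else 1 := by
  unfold Emix; split <;> simp [lv2_y _ _ _ _ h]
lemma Emix_other (h1 : t ≠ x) (h2 : t ≠ y) : Emix x y S i t = 0 := by
  unfold Emix; split <;> simp [lv2_other _ _ _ _ _ h1 h2]
end EmixEval

lemma Emix_compl (x y : X) (hxy : x ≠ y) (S : Finset (Fin N)) :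
    Emix (N := N) y x Sᶜ = Emix x y S := by
  funext i t
  unfold Emix lv2
  by_cases hS : i ∈ S <;> by_cases htx : t = x <;> by_cases hty : t = y <;>
    simp_all [hxy, Finset.mem_compl] <;> omega

variable (hι : Function.Injective ι) (hC : ∀ x, ι x < C)
variable (hfA : ∀ U, f U ∈ A)
variable (hSP : ∀ (U : Fin N → (X → ℕ)) (i : Fin N) (u' : X → ℕ),
    f (Function.update U i u') = f U ∨ Pr ι C (U i) (f U) (f (Function.update U i u')))
variable (hTop : ∀ y ∈ A, ∀ U : Fin N → (X → ℕ),
    (∀ (i : Fin N) (x : X), x ≠ y → Pr ι C (U i) y x) → f U = y)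

include hSP in
/-- Monotonicity: if the winner `w`'s strict lower set weakly grows for every voter,
the winner is unchanged. -/
lemma mono (U V : Fin N → (X → ℕ)) (w : X) (hw : f U = w)
    (h : ∀ (i : Fin N) (y : X), Pr ι C (U i) w y → Pr ι C (V i) w y) : f V = w := by
  refine coordWalk f U V w ?_ hw
  intro W i hmem hfW
  rcases hSP W i (V i) with h1 | h1
  · rw [h1, hfW]
  · rw [hfW] at h1
    set b := f (Function.update W i (V i)) with hb
    have h2 := hSP (Function.update W i (V i)) i (W i)
    rw [Function.update_idem, Function.update_eq_self] at h2
    rw [Function.update_self] at h2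
    rcases h2 with h2 | h2
    · rw [hfW] at h2; exact h2.symm
    · rw [hfW] at h2
      exfalso
      rcases hmem i with hWi | hWi
      · rw [hWi] at h1
        exact Pr_asymm (h i b h1) h2
      · rw [hWi] at h1
        exact Pr_asymm h1 h2

include hι hC hSP hfA hTop in
/-- The outcome at an `Emix` profile is `x` or `y`. -/
lemma Wel {x y : X} (hx : x ∈ A) (hy : y ∈ A) (hxy : x ≠ y) (S : Finset (Fin N)) :
    f (Emix x y S) = x ∨ f (Emix x y S) = y := by
  by_contra hcon
  push_neg at hcon
  obtain ⟨hnx, hny⟩ := hcon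
  set w := f (Emix x y S) with hw
  have hmono := mono f hSP (Emix x y S) (fun _ => lv3 x y w 3 2 1) w rfl ?_
  · have htop := hTop x hx (fun _ => lv3 x y w 3 2 1) ?_
    · rw [hmono] at htop; exact hnx htop
    · intro i t ht
      refine Pr_of_lt hC ?_
      show lv3 x y w 3 2 1 t < lv3 x y w 3 2 1 x
      rw [lv3_x]
      by_cases h2 : t = y
      · subst h2; rw [lv3_y _ _ _ _ _ _ (Ne.symm hxy)]; omega
      · by_cases h3 : t = w
        · subst h3; rw [lv3_z _ _ _ _ _ _ hnx hny]; omega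
        · rw [lv3_other _ _ _ _ _ _ _ ht h2 h3]; omega
  · intro i t hPr
    have hle := hPr.le hC
    have hEw : (Emix x y S i) w = 0 := Emix_other _ _ _ _ _ hnx hny
    rw [hEw] at hle
    have htx : t ≠ x := by
      intro h; subst h
      rw [Emix_vx] at hle; split at hle <;> omega
    have hty : t ≠ y := by
      intro h; subst h
      rw [Emix_vy _ _ _ _ (Ne.symm hxy)] at hle; split at hle <;> omega
    have htw : t ≠ w := by
      intro h; subst h; exact Pr_irrefl _ hPr
    refine Pr_of_lt hC ?_
    show lv3 x y w 3 2 1 t < lv3 x y w 3 2 1 w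
    rw [lv3_z _ _ _ _ _ _ hnx hny, lv3_other _ _ _ _ _ _ _ htx hty htw]
    omega

include hC in
lemma Pr_iff {u : X → ℕ} {a b : X} (hne : u a ≠ u b) : Pr ι C u a b ↔ u b < u a :=
  ⟨fun h => lt_of_le_of_ne (h.le hC) (Ne.symm hne), fun h => Pr_of_lt hC h⟩

include hC hTop in
lemma Wuniv {x y : X} (hy : y ∈ A) (hxy : x ≠ y) : Wn f x y Finset.univ := by
  refine hTop y hy _ ?_
  intro i t ht
  refine Pr_of_lt hC ?_
  rw [Emix_vy _ _ _ _ (Ne.symm hxy), if_pos (Finset.mem_univ i)]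
  by_cases h1 : t = x
  · subst h1; rw [Emix_vx, if_pos (Finset.mem_univ i)]; omega
  · rw [Emix_other _ _ _ _ _ h1 ht]; omega

include hC hTop in
lemma Wempty {x y : X} (hx : x ∈ A) (hxy : x ≠ y) : ¬ Wn f x y (∅ : Finset (Fin N)) := by
  have hfx : f (Emix x y ∅) = x := by
    refine hTop x hx _ ?_
    intro i t ht
    refine Pr_of_lt hC ?_
    rw [Emix_vx, if_neg (Finset.notMem_empty i)]
    by_cases h1 : t = y
    · subst h1; rw [Emix_vy _ _ _ _ (Ne.symm hxy), if_neg (Finset.notMem_empty i)]; omega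
    · rw [Emix_other _ _ _ _ _ ht h1]; omega
  unfold Wn
  rw [hfx]
  exact hxy

include hι hC hSP hfA hTop in
lemma WXOR {x y : X} (hx : x ∈ A) (hy : y ∈ A) (hxy : x ≠ y) (S : Finset (Fin N)) :
    Wn f x y S ↔ ¬ Wn f y x Sᶜ := by
  have hel := Wel f A hι hC hfA hSP hTop hx hy hxy S
  have hyx : f (Emix y x Sᶜ) = x ↔ f (Emix x y S) = x := by
    rw [Emix_compl x y hxy S]
  unfold Wn
  constructor
  · intro h
    rw [hyx]
    intro h2
    exact hxy (h2.symm.trans h)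
  · intro h
    rcases hel with h1 | h1
    · exact absurd (hyx.mpr h1) h
    · exact h1

include hC hSP in
lemma Wmono {x y : X} (hxy : x ≠ y) {S T : Finset (Fin N)} (hST : S ⊆ T)
    (h : Wn f x y S) : Wn f x y T := by
  refine mono f hSP (Emix x y S) (Emix x y T) y h ?_
  intro i t hPr
  have hty : t ≠ y := fun ht => Pr_irrefl _ (ht ▸ hPr)
  by_cases hiT : i ∈ T
  · refine Pr_of_lt hC ?_
    rw [Emix_vy _ _ _ _ (Ne.symm hxy), if_pos hiT]
    by_cases h1 : t = x
    · subst h1; rw [Emix_vx, if_pos hiT]; omega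
    · rw [Emix_other _ _ _ _ _ h1 hty]; omega
  · have hiS : i ∉ S := fun hh => hiT (hST hh)
    have : Emix x y S i = Emix (N := N) x y T i := by
      unfold Emix; rw [if_neg hiS, if_neg hiT]
    rwa [this] at hPr

include hC hSP in
/-- If `f U = w`, then the coalition of voters strictly preferring `w` to `v` is
winning for `w` against `v`. -/
lemma lemmaP (U : Fin N → (X → ℕ)) {v w : X} (hU : f U = w) (hvw : v ≠ w)
    (S : Finset (Fin N)) (hS : ∀ j, j ∈ S ↔ Pr ι C (U j) w v) : Wn f v w S := by
  refine mono f hSP U (Emix v w S) w hU ?_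
  intro i t hPr
  have htw : t ≠ w := fun ht => Pr_irrefl _ (ht ▸ hPr)
  by_cases hiS : i ∈ S
  · refine Pr_of_lt hC ?_
    rw [Emix_vy _ _ _ _ (Ne.symm hvw), if_pos hiS]
    by_cases h1 : t = v
    · subst h1; rw [Emix_vx, if_pos hiS]; omega
    · rw [Emix_other _ _ _ _ _ h1 htw]; omega
  · have hnPr : ¬ Pr ι C (U i) w v := fun hh => hiS ((hS i).mpr hh)
    have htv : t ≠ v := fun ht => hnPr (ht ▸ hPr)
    refine Pr_of_lt hC ?_
    rw [Emix_vy _ _ _ _ (Ne.symm hvw), if_neg hiS, Emix_other _ _ _ _ _ htv htw]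
    omega

include hι hC hSP hfA hTop in
/-- Three-element version of `Wel`. -/
lemma Wel3 {x y z : X} (hx : x ∈ A) (hy : y ∈ A) (hz : z ∈ A)
    (hxy : x ≠ y) (hxz : x ≠ z) (hyz : y ≠ z) (U : Fin N → (X → ℕ))
    (hU0 : ∀ i t, t ≠ x → t ≠ y → t ≠ z → U i t = 0)
    (hU1 : ∀ i, 1 ≤ U i x ∧ 1 ≤ U i y ∧ 1 ≤ U i z) :
    f U = x ∨ f U = y ∨ f U = z := by
  by_contra hcon
  push_neg at hcon
  obtain ⟨hnx, hny, hnz⟩ := hcon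
  set w := f U with hw
  have hmono := mono f hSP U (fun _ => lv4 x y z w 4 3 2 1) w rfl ?_
  · have htop := hTop x hx (fun _ => lv4 x y z w 4 3 2 1) ?_
    · rw [hmono] at htop; exact hnx htop
    · intro i t ht
      refine Pr_of_lt hC ?_
      show lv4 x y z w 4 3 2 1 t < lv4 x y z w 4 3 2 1 x
      rw [lv4_x]
      by_cases h2 : t = y
      · subst h2; rw [lv4_y _ _ _ _ _ _ _ _ (Ne.symm hxy)]; omega
      · by_cases h3 : t = z
        · subst h3; rw [lv4_z _ _ _ _ _ _ _ _ (Ne.symm hxz) (Ne.symm hyz)]; omega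
        · by_cases h4 : t = w
          · subst h4; rw [lv4_w _ _ _ _ _ _ _ _ hnx hny hnz]; omega
          · rw [lv4_other _ _ _ _ _ _ _ _ _ ht h2 h3 h4]; omega
  · intro i t hPr
    have hle := hPr.le hC
    have hUw : U i w = 0 := hU0 i w hnx hny hnz
    rw [hUw] at hle
    obtain ⟨h1, h2, h3⟩ := hU1 i
    have htx : t ≠ x := fun hh => by subst hh; omega
    have hty : t ≠ y := fun hh => by subst hh; omega
    have htz : t ≠ z := fun hh => by subst hh; omega
    have htw : t ≠ w := fun ht => Pr_irrefl _ (ht ▸ hPr)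
    refine Pr_of_lt hC ?_
    show lv4 x y z w 4 3 2 1 t < lv4 x y z w 4 3 2 1 w
    rw [lv4_w _ _ _ _ _ _ _ _ hnx hny hnz, lv4_other _ _ _ _ _ _ _ _ _ htx hty htz htw]
    omega

include hι hC hSP hfA hTop in
/-- Changing the loser: if `S` is winning for `y` against `x`, it is also winning
for `y` against `z`. -/
lemma WnLoser {x y z : X} (hx : x ∈ A) (hy : y ∈ A) (hz : z ∈ A)
    (hxy : x ≠ y) (hxz : x ≠ z) (hyz : y ≠ z) (S : Finset (Fin N))
    (K : Wn f x y S) : Wn f z y S := by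
  classical
  set G : Fin N → X → ℕ :=
    fun j => if j ∈ S then lv3 x y z 2 3 1 else lv3 x y z 3 1 2 with hG
  have ex : ∀ p q r, lv3 x y z p q r x = p := fun p q r => lv3_x x y z p q r
  have ey : ∀ p q r, lv3 x y z p q r y = q := fun p q r => lv3_y x y z p q r (Ne.symm hxy)
  have ez : ∀ p q r, lv3 x y z p q r z = r :=
    fun p q r => lv3_z x y z p q r (Ne.symm hxz) (Ne.symm hyz)
  have h3 := Wel3 f A hι hC hfA hSP hTop hx hy hz hxy hxz hyz G ?_ ?_
  · rcases h3 with hfx | hfy | hfz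
    · exfalso
      have hP : Wn f y x Sᶜ := by
        refine lemmaP f hC hSP G hfx (Ne.symm hxy) Sᶜ ?_
        intro j
        by_cases hj : j ∈ S
        · have hGj : G j = lv3 x y z 2 3 1 := by simp only [hG]; rw [if_pos hj]
          rw [hGj, Pr_iff hC (by rw [ex, ey]; omega), ex, ey]
          simp [Finset.mem_compl, hj]
        · have hGj : G j = lv3 x y z 3 1 2 := by simp only [hG]; rw [if_neg hj]
          rw [hGj, Pr_iff hC (by rw [ex, ey]; omega), ex, ey]
          simp [Finset.mem_compl, hj]
      exact (WXOR f A hι hC hfA hSP hTop hx hy hxy S).mp K hP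
    · refine lemmaP f hC hSP G hfy (Ne.symm hyz) S ?_
      intro j
      by_cases hj : j ∈ S
      · have hGj : G j = lv3 x y z 2 3 1 := by simp only [hG]; rw [if_pos hj]
        rw [hGj, Pr_iff hC (by rw [ey, ez]; omega), ey, ez]
        simp [hj]
      · have hGj : G j = lv3 x y z 3 1 2 := by simp only [hG]; rw [if_neg hj]
        rw [hGj, Pr_iff hC (by rw [ey, ez]; omega), ey, ez]
        simp [hj]
    · exfalso
      have hP : Wn f x z (∅ : Finset (Fin N)) := by
        refine lemmaP f hC hSP G hfz hxz ∅ ?_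
        intro j
        by_cases hj : j ∈ S
        · have hGj : G j = lv3 x y z 2 3 1 := by simp only [hG]; rw [if_pos hj]
          rw [hGj, Pr_iff hC (by rw [ex, ez]; omega), ex, ez]
          simp
        · have hGj : G j = lv3 x y z 3 1 2 := by simp only [hG]; rw [if_neg hj]
          rw [hGj, Pr_iff hC (by rw [ex, ez]; omega), ex, ez]
          simp
      exact Wempty f A hC hTop hx hxz hP
  · intro i t ht1 ht2 ht3
    simp only [hG]
    split <;> exact lv3_other x y z t _ _ _ ht1 ht2 ht3
  · intro i
    simp only [hG]
    split <;> rw [ex, ey, ez] <;> omega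

include hι hC hSP hfA hTop in
/-- Changing the winner: if `S` is winning for `y` against `x`, it is also winning
for `z` against `x`. -/
lemma WnWinner {x y z : X} (hx : x ∈ A) (hy : y ∈ A) (hz : z ∈ A)
    (hxy : x ≠ y) (hxz : x ≠ z) (hyz : y ≠ z) (S : Finset (Fin N))
    (K : Wn f x y S) : Wn f x z S := by
  classical
  set G : Fin N → X → ℕ :=
    fun j => if j ∈ S then lv3 x y z 1 2 3 else lv3 x y z 3 1 2 with hG
  have ex : ∀ p q r, lv3 x y z p q r x = p := fun p q r => lv3_x x y z p q r
  have ey : ∀ p q r, lv3 x y z p q r y = q := fun p q r => lv3_y x y z p q r (Ne.symm hxy)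
  have ez : ∀ p q r, lv3 x y z p q r z = r :=
    fun p q r => lv3_z x y z p q r (Ne.symm hxz) (Ne.symm hyz)
  have h3 := Wel3 f A hι hC hfA hSP hTop hx hy hz hxy hxz hyz G ?_ ?_
  · rcases h3 with hfx | hfy | hfz
    · exfalso
      have hP : Wn f y x Sᶜ := by
        refine lemmaP f hC hSP G hfx (Ne.symm hxy) Sᶜ ?_
        intro j
        by_cases hj : j ∈ S
        · have hGj : G j = lv3 x y z 1 2 3 := by simp only [hG]; rw [if_pos hj]
          rw [hGj, Pr_iff hC (by rw [ex, ey]; omega), ex, ey]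
          simp [Finset.mem_compl, hj]
        · have hGj : G j = lv3 x y z 3 1 2 := by simp only [hG]; rw [if_neg hj]
          rw [hGj, Pr_iff hC (by rw [ex, ey]; omega), ex, ey]
          simp [Finset.mem_compl, hj]
      exact (WXOR f A hι hC hfA hSP hTop hx hy hxy S).mp K hP
    · exfalso
      have hP : Wn f z y (∅ : Finset (Fin N)) := by
        refine lemmaP f hC hSP G hfy (Ne.symm hyz) ∅ ?_
        intro j
        by_cases hj : j ∈ S
        · have hGj : G j = lv3 x y z 1 2 3 := by simp only [hG]; rw [if_pos hj]
          rw [hGj, Pr_iff hC (by rw [ey, ez]; omega), ey, ez]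
          simp
        · have hGj : G j = lv3 x y z 3 1 2 := by simp only [hG]; rw [if_neg hj]
          rw [hGj, Pr_iff hC (by rw [ey, ez]; omega), ey, ez]
          simp
      exact Wempty f A hC hTop hz (Ne.symm hyz) hP
    · refine lemmaP f hC hSP G hfz hxz S ?_
      intro j
      by_cases hj : j ∈ S
      · have hGj : G j = lv3 x y z 1 2 3 := by simp only [hG]; rw [if_pos hj]
        rw [hGj, Pr_iff hC (by rw [ex, ez]; omega), ex, ez]
        simp [hj]
      · have hGj : G j = lv3 x y z 3 1 2 := by simp only [hG]; rw [if_neg hj]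
        rw [hGj, Pr_iff hC (by rw [ex, ez]; omega), ex, ez]
        simp [hj]
  · intro i t ht1 ht2 ht3
    simp only [hG]
    split <;> exact lv3_other x y z t _ _ _ ht1 ht2 ht3
  · intro i
    simp only [hG]
    split <;> rw [ex, ey, ez] <;> omega

include hι hC hSP hfA hTop in
/-- A coalition winning for one pair is winning for every pair. -/
lemma spread {p q : X} (hp : p ∈ A) (hq : q ∈ A) (hpq : p ≠ q) (S : Finset (Fin N))
    (h : Wn f p q S) (hthird : ∀ u v : X, ∃ r ∈ A, r ≠ u ∧ r ≠ v) :
    ∀ x y, x ∈ A → y ∈ A → x ≠ y → Wn f x y S := by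
  intro x y hx hyA hxy
  by_cases hyq : y = q
  · subst hyq
    by_cases hxp : x = p
    · subst hxp; exact h
    · exact WnLoser f A hι hC hfA hSP hTop hp hq hx hpq (Ne.symm hxp) (Ne.symm hxy) S h
  · by_cases hyp : y = p
    · subst hyp
      obtain ⟨r, hrA, hrp, hrq⟩ := hthird y q
      have h2 : Wn f r q S :=
        WnLoser f A hι hC hfA hSP hTop hp hq hrA hpq (Ne.symm hrp) (Ne.symm hrq) S h
      have h3 : Wn f r y S :=
        WnWinner f A hι hC hfA hSP hTop hrA hq hp hrq hrp (Ne.symm hpq) S h2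
      by_cases hxr : x = r
      · subst hxr; exact h3
      · exact WnLoser f A hι hC hfA hSP hTop hrA hp hx hrp (Ne.symm hxr) (Ne.symm hxy) S h3
    · have h2 : Wn f p y S :=
        WnWinner f A hι hC hfA hSP hTop hp hq hyA hpq (fun hh => hyp hh.symm)
          (fun hh => hyq hh.symm) S h
      by_cases hxp : x = p
      · subst hxp; exact h2
      · exact WnLoser f A hι hC hfA hSP hTop hp hyA hx (fun hh => hyp hh.symm)
          (Ne.symm hxp) (Ne.symm hxy) S h2

include hι hC hSP hfA hTop in
/-- The abstract dictatorship theorem for strategy-proof social choice functions on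
utility profiles. -/
theorem dictator
    (hA3 : ∃ a b c, a ∈ A ∧ b ∈ A ∧ c ∈ A ∧ a ≠ b ∧ a ≠ c ∧ b ≠ c) :
    ∃ i : Fin N, ∀ (U : Fin N → (X → ℕ)) (y : X), y ∈ A → y ≠ f U →
      Pr ι C (U i) (f U) y := by
  classical
  obtain ⟨a, b, c, ha, hb, hc, hab, hac, hbc⟩ := hA3
  have hthird : ∀ u v : X, ∃ r ∈ A, r ≠ u ∧ r ≠ v := by
    intro u v
    by_cases h1 : a ≠ u ∧ a ≠ v
    · exact ⟨a, ha, h1.1, h1.2⟩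
    by_cases h2 : b ≠ u ∧ b ≠ v
    · exact ⟨b, hb, h2.1, h2.2⟩
    push_neg at h1 h2
    refine ⟨c, hc, ?_, ?_⟩
    · intro hcu; subst hcu
      rcases em (a = c) with h | h
      · exact hac h
      · have hav := h1 (fun hh => h hh)
        rcases em (b = c) with h' | h'
        · exact hbc h'
        · have hbv := h2 (fun hh => h' hh)
          exact hab (hav.trans hbv.symm)
    · intro hcv; subst hcv
      rcases em (a = c) with h | h
      · exact hac h
      · have hau : a = u := by
          rcases em (a = u) with h'' | h''
          · exact h''
          · exact absurd (h1 h'') h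
        rcases em (b = c) with h' | h'
        · exact hbc h'
        · have hbu : b = u := by
            rcases em (b = u) with h'' | h''
            · exact h''
            · exact absurd (h2 h'') h'
          exact hab (hau.trans hbu.symm)
  -- minimal winning coalition
  set Win : Finset (Fin N) → Prop :=
    fun S => ∃ x y, x ∈ A ∧ y ∈ A ∧ x ≠ y ∧ Wn f x y S with hWin
  have hUnivWin : Win Finset.univ :=
    ⟨a, b, ha, hb, hab, Wuniv f A hC hTop hb hab⟩
  obtain ⟨S₀, hS₀mem, hS₀min⟩ := Finset.exists_min_image
    (Finset.univ.filter fun S => Win S) Finset.card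
    ⟨Finset.univ, by simp [hUnivWin]⟩
  rw [Finset.mem_filter] at hS₀mem
  obtain ⟨-, a₀, b₀, ha₀, hb₀, hab₀, hW₀⟩ := hS₀mem
  have hS₀ne : S₀.Nonempty := by
    rcases Finset.eq_empty_or_nonempty S₀ with rfl | h
    · exact absurd hW₀ (Wempty f A hC hTop ha₀ hab₀)
    · exact h
  obtain ⟨i, hi⟩ := hS₀ne
  obtain ⟨c₀, hc₀A, hc₀a, hc₀b⟩ := hthird a₀ b₀
  -- the split profile
  set T := S₀.erase i with hT
  have hiT : i ∉ T := Finset.notMem_erase i S₀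
  set G : Fin N → X → ℕ := fun j =>
    if j = i then lv3 a₀ b₀ c₀ 2 3 1
    else if j ∈ T then lv3 a₀ b₀ c₀ 1 2 3
    else lv3 a₀ b₀ c₀ 3 1 2 with hG
  have ex : ∀ p q r, lv3 a₀ b₀ c₀ p q r a₀ = p := fun p q r => lv3_x a₀ b₀ c₀ p q r
  have ey : ∀ p q r, lv3 a₀ b₀ c₀ p q r b₀ = q :=
    fun p q r => lv3_y a₀ b₀ c₀ p q r (Ne.symm hab₀)
  have ez : ∀ p q r, lv3 a₀ b₀ c₀ p q r c₀ = r := fun p q r => lv3_z a₀ b₀ c₀ p q r hc₀a hc₀b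
  have h3 := Wel3 f A hι hC hfA hSP hTop ha₀ hb₀ hc₀A hab₀ (Ne.symm hc₀a) (Ne.symm hc₀b) G ?_ ?_
  rotate_left
  · intro j t ht1 ht2 ht3
    simp only [hG]
    split
    · exact lv3_other a₀ b₀ c₀ t _ _ _ ht1 ht2 ht3
    · split <;> exact lv3_other a₀ b₀ c₀ t _ _ _ ht1 ht2 ht3
  · intro j
    simp only [hG]
    split
    · rw [ex, ey, ez]; omega
    · split <;> rw [ex, ey, ez] <;> omega
  -- analyze the three cases
  have hWcb : Wn f c₀ b₀ {i} := by
    rcases h3 with hfa | hfb | hfc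
    · exfalso
      have hP : Wn f b₀ a₀ S₀ᶜ := by
        refine lemmaP f hC hSP G hfa (Ne.symm hab₀) S₀ᶜ ?_
        intro j
        by_cases hj : j = i
        · subst hj
          have hGj : G j = lv3 a₀ b₀ c₀ 2 3 1 := by simp [hG]
          rw [hGj, Pr_iff hC (by rw [ex, ey]; omega), ex, ey]
          simp [Finset.mem_compl, hi]
        · by_cases hjT : j ∈ T
          · have hGj : G j = lv3 a₀ b₀ c₀ 1 2 3 := by simp [hG, hj, hjT]
            have hjS : j ∈ S₀ := (Finset.mem_erase.mp hjT).2
            rw [hGj, Pr_iff hC (by rw [ex, ey]; omega), ex, ey]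
            simp [Finset.mem_compl, hjS]
          · have hGj : G j = lv3 a₀ b₀ c₀ 3 1 2 := by simp [hG, hj, hjT]
            have hjS : j ∉ S₀ := fun hh => hjT (Finset.mem_erase.mpr ⟨hj, hh⟩)
            rw [hGj, Pr_iff hC (by rw [ex, ey]; omega), ex, ey]
            simp [Finset.mem_compl, hjS]
      exact (WXOR f A hι hC hfA hSP hTop ha₀ hb₀ hab₀ S₀).mp hW₀ hP
    · refine lemmaP f hC hSP G hfb (Ne.symm (Ne.symm hc₀b)) {i} ?_
      intro j
      by_cases hj : j = i
      · subst hj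
        have hGj : G j = lv3 a₀ b₀ c₀ 2 3 1 := by simp [hG]
        rw [hGj, Pr_iff hC (by rw [ey, ez]; omega), ey, ez]
        simp
      · by_cases hjT : j ∈ T
        · have hGj : G j = lv3 a₀ b₀ c₀ 1 2 3 := by simp [hG, hj, hjT]
          rw [hGj, Pr_iff hC (by rw [ey, ez]; omega), ey, ez]
          simp [hj]
        · have hGj : G j = lv3 a₀ b₀ c₀ 3 1 2 := by simp [hG, hj, hjT]
          rw [hGj, Pr_iff hC (by rw [ey, ez]; omega), ey, ez]
          simp [hj]
    · exfalso
      have hP : Wn f a₀ c₀ T := by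
        refine lemmaP f hC hSP G hfc (fun hh => hc₀a hh.symm) T ?_
        intro j
        by_cases hj : j = i
        · subst hj
          have hGj : G j = lv3 a₀ b₀ c₀ 2 3 1 := by simp [hG]
          rw [hGj, Pr_iff hC (by rw [ex, ez]; omega), ex, ez]
          simp [hiT]
        · by_cases hjT : j ∈ T
          · have hGj : G j = lv3 a₀ b₀ c₀ 1 2 3 := by simp [hG, hj, hjT]
            rw [hGj, Pr_iff hC (by rw [ex, ez]; omega), ex, ez]
            simp [hjT]
          · have hGj : G j = lv3 a₀ b₀ c₀ 3 1 2 := by simp [hG, hj, hjT]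
            rw [hGj, Pr_iff hC (by rw [ex, ez]; omega), ex, ez]
            simp [hjT]
      have hTWin : T ∈ Finset.univ.filter fun S => Win S := by
        rw [Finset.mem_filter]
        exact ⟨Finset.mem_univ T, a₀, c₀, ha₀, hc₀A, fun hh => hc₀a hh.symm, hP⟩
      have := hS₀min T hTWin
      rw [hT, Finset.card_erase_of_mem hi] at this
      have : 1 ≤ S₀.card := Finset.card_pos.mpr ⟨i, hi⟩
      omega
  -- spread to all pairs, dictatorship of i
  have hAll := spread f A hι hC hfA hSP hTop hc₀A hb₀ (fun hh => (hc₀b hh)) {i} hWcb hthird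
  refine ⟨i, ?_⟩
  intro U y hyA hyne
  by_contra hnPr
  have hPr2 : Pr ι C (U i) y (f U) := by
    rcases Pr_trichot hι hC (Ne.symm hyne) with h | h
    · exact absurd h hnPr
    · exact h
  set D := Finset.univ.filter (fun j => Pr ι C (U j) (f U) y) with hD
  have hWD : Wn f y (f U) D := by
    refine lemmaP f hC hSP U rfl hyne D ?_
    intro j
    simp [hD]
  have hsub : D ⊆ ({i} : Finset (Fin N))ᶜ := by
    intro j hj
    rw [Finset.mem_compl, Finset.mem_singleton]
    intro hji
    subst hji
    rw [hD, Finset.mem_filter] at hj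
    exact hnPr hj.2
  have hWDc : Wn f y (f U) ({i} : Finset (Fin N))ᶜ :=
    Wmono f hC hSP hyne hsub hWD
  exact (WXOR f A hι hC hfA hSP hTop (hfA U) hyA (Ne.symm hyne) {i}).mp
    (hAll (f U) y (hfA U) hyA (Ne.symm hyne)) hWDc

end SCF
end GibbardAux

open GibbardAux in
/-- Gibbard's 1973 theorem (game-form version). A game form `g` over a finite
outcome set `X` is straightforward if for every profile of strict linear orders
(strict total orders) each player has a dominant strategy. If `g` is
straightforward and its range has at least 3 outcomes, then some player is a
dictator: they can force any outcome in the range of `g` regardless of the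
others' strategies. -/
theorem gibbard_1973_straightforward_game_form_is_dictatorial
    {X : Type*} [Fintype X] {N : ℕ} (S : Fin N → Type*) (hS : ∀ i, Nonempty (S i))
    (g : (∀ i, S i) → X)
    (hstraight : ∀ pref : Fin N → X → X → Prop,
      (∀ i, IsStrictTotalOrder X (pref i)) →
      ∀ i : Fin N, ∃ sistar : S i, ∀ s : ∀ j, S j,
        pref i (g (Function.update s i sistar)) (g s) ∨
          g (Function.update s i sistar) = g s)
    (hrange : 3 ≤ (Set.range g).ncard) :
    ∃ i : Fin N, ∀ x ∈ Set.range g, ∃ si : S i,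
      ∀ s : ∀ j, S j, g (Function.update s i si) = x := by
  classical
  obtain ⟨a, b, c, ha, hb, hc, hab, hac, hbc⟩ :=
    (Set.two_lt_ncard_iff (Set.toFinite _)).mp
      (by omega : 2 < (Set.range g).ncard)
  -- tie-breaking injection into ℕ
  set C : ℕ := Fintype.card X with hC_def
  obtain ⟨ι, hι, hC⟩ : ∃ ι : X → ℕ, Function.Injective ι ∧ ∀ x, ι x < C :=
    ⟨fun x => ((Fintype.equivFin X) x : ℕ),
      fun x y h => (Fintype.equivFin X).injective (Fin.ext h),
      fun x => ((Fintype.equivFin X) x).isLt⟩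
  have hSTO : ∀ u : X → ℕ, IsStrictTotalOrder X (Pr ι C u) :=
    fun u => Pr_STO hι hC u
  -- dominant strategies for utility-induced preferences
  choose σ hσ using fun (i : Fin N) (u : X → ℕ) =>
    hstraight (fun _ => Pr ι C u) (fun _ => hSTO u) i
  -- the induced social choice function on utility profiles
  set F : (Fin N → (X → ℕ)) → X := fun U => g (fun j => σ j (U j)) with hF
  have hprof : ∀ (U : Fin N → X → ℕ) (i : Fin N) (u' : X → ℕ),
      (fun j => σ j (Function.update U i u' j)) =
        Function.update (fun j => σ j (U j)) i (σ i u') := by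
    intro U i u'
    funext j
    rcases eq_or_ne j i with rfl | hj
    · simp
    · simp [Function.update_of_ne hj]
  have hfA : ∀ U, F U ∈ Set.range g := fun U => ⟨_, rfl⟩
  have hSP : ∀ (U : Fin N → (X → ℕ)) (i : Fin N) (u' : X → ℕ),
      F (Function.update U i u') = F U ∨
        Pr ι C (U i) (F U) (F (Function.update U i u')) := by
    intro U i u'
    have h1 : F (Function.update U i u') =
        g (Function.update (fun j => σ j (U j)) i (σ i u')) := congrArg g (hprof U i u')
    have hdom := hσ i (U i) (Function.update (fun j => σ j (U j)) i (σ i u'))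
    have h2 : Function.update
        (Function.update (fun j => σ j (U j)) i (σ i u')) i (σ i (U i)) =
        (fun j => σ j (U j)) := by
      rw [Function.update_idem]
      exact Function.update_eq_self i _
    rw [h2] at hdom
    rw [h1]
    rcases hdom with hPr | heq
    · right; exact hPr
    · left; exact heq.symm
  have hTop : ∀ y ∈ Set.range g, ∀ U : Fin N → (X → ℕ),
      (∀ (i : Fin N) (x : X), x ≠ y → Pr ι C (U i) y x) → F U = y := by
    rintro y ⟨s₀, rfl⟩ U hU
    refine coordWalk g s₀ (fun j => σ j (U j)) (g s₀) ?_ rfl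
    intro W i hmem hW
    have hdom := hσ i (U i) W
    rw [hW] at hdom
    rcases hdom with hPr | heq
    · rcases eq_or_ne (g (Function.update W i (σ i (U i)))) (g s₀) with h | h
      · exact h
      · exact absurd hPr (Pr_asymm (hU i _ h))
    · exact heq
  obtain ⟨i, hdict⟩ := dictator F (Set.range g) hι hC hfA hSP hTop
    ⟨a, b, c, ha, hb, hc, hab, hac, hbc⟩
  refine ⟨i, ?_⟩
  rintro x ⟨s₀, rfl⟩
  set ux : X → ℕ := fun t => if t = g s₀ then 1 else 0 with hux
  refine ⟨σ i ux, ?_⟩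
  intro s
  set y := g (Function.update s i (σ i ux)) with hy
  set uy : X → ℕ := fun t => if t = y then 1 else 0 with huy
  set U : Fin N → X → ℕ := fun j => if j = i then ux else uy with hU
  have hUi : U i = ux := by simp [hU]
  have hFU : F U = g s₀ := by
    by_contra hne
    have hPr := hdict U (g s₀) ⟨s₀, rfl⟩ (fun hh => hne hh.symm)
    have hle := hPr.le hC
    rw [hUi] at hle
    simp [hux, hne] at hle
  have hchain : g (fun j => σ j (U j)) = y := by
    refine coordWalk g (Function.update s i (σ i ux)) (fun j => σ j (U j)) y ?_ hy.symm
    intro W jj hmem hW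
    rcases eq_or_ne jj i with rfl | hj
    · have hWj : W jj = σ jj ux := by
        rcases hmem jj with h | h
        · rw [h, Function.update_self]
        · rw [h]
          show σ jj (U jj) = σ jj ux
          rw [hUi]
      have hupd : Function.update W jj ((fun j => σ j (U j)) jj) = W := by
        show Function.update W jj (σ jj (U jj)) = W
        rw [hUi, ← hWj]
        exact Function.update_eq_self jj W
      rw [hupd, hW]
    · have hUj : U jj = uy := by simp [hU, hj]
      have hdom := hσ jj uy W
      rw [hW] at hdom
      show g (Function.update W jj (σ jj (U jj))) = y
      rw [hUj]
      rcases hdom with hPr | heq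
      · rcases eq_or_ne (g (Function.update W jj (σ jj uy))) y with h | h
        · exact h
        · exfalso
          have hle := hPr.le hC
          have e1 : uy y = 1 := if_pos rfl
          have e2 : uy (g (Function.update W jj (σ jj uy))) = 0 := if_neg h
          omega
      · exact heq
  have hFUy : F U = y := hchain
  rw [hFU] at hFUy
  exact hFUy.symm
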